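/- Chernoff's theorem on proper families: Let E be a real Banach space, let (T_t)_{t≥0} be a strongly continuous semigroup of bounded linear operators on E (T_0 = id, T_{s+t} = T_s ∘ T_t, and t ↦ T_t u is continuous for every u ∈ E), and let D := { u ∈ E : the limit L u := lim_{t→0+} (u − T_t u)/t exists } be its generator domain, assumed dense in E. Let (P_t)_{t≥0} be a family of bounded linear operators on E such that: (i) there are constants C, δ > 0 with ‖P_t‖ ≤ 1 + C·t for all 0 ≤ t ≤ δ; (ii) the family is strongly continuous with P_0 = id (i.e. t ↦ P_t u is continuous for every u ∈ E); (iii) for every u of the form u = T_ε v with ε > 0 and v ∈ D, one has (P_t u − u)/t → −L u as t → 0+. Then for every u ∈ E and every t > 0, and for any sequence of partitions τ = {0 = τ_0 < τ_1 < ⋯ < τ_N = t} of [0,t] whose mesh max_j (τ_j − τ_{j−1}) tends to zero, the compositions P_{τ_1−τ_0} ∘ P_{τ_2−τ_1} ∘ ⋯ ∘ P_{τ_N−τ_{N−1}} applied to u converge in E to T_t u. -/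

import Mathlib

open Filter Topology

section ChernoffAux

set_option linter.unusedSectionVars false
set_option linter.unusedVariables false

variable {E : Type*} [NormedAddCommGroup E] [NormedSpace ℝ E] [CompleteSpace E]

/-- Local uniform boundedness of a strongly continuous family of operators. -/
lemma chernoff_loc_bound (T : ℝ → E →L[ℝ] E)
    (hTcont : ∀ u : E, ContinuousOn (fun t => T t u) (Set.Ici (0 : ℝ)))
    (b : ℝ) : ∃ M : ℝ, 0 ≤ M ∧ ∀ σ ∈ Set.Icc (0:ℝ) b, ‖T σ‖ ≤ M := by
  rcases le_or_gt b 0 with hb | hb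
  · refine ⟨max ‖T 0‖ 0, le_max_right _ _, ?_⟩
    rintro σ ⟨h1, h2⟩
    have : σ = 0 := le_antisymm (h2.trans hb) h1
    subst this; exact le_max_left _ _
  · have key : ∀ x : E, ∃ Cx : ℝ, ∀ i : ↥(Set.Icc (0:ℝ) b), ‖T i x‖ ≤ Cx := by
      intro x
      obtain ⟨Cx, hCx⟩ := (isCompact_Icc (a := (0:ℝ)) (b := b)).exists_bound_of_continuousOn
        ((hTcont x).mono (fun y hy => hy.1))
      exact ⟨Cx, fun i => hCx i i.2⟩
    obtain ⟨C', hC'⟩ := banach_steinhaus (g := fun i : ↥(Set.Icc (0:ℝ) b) => T i) key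
    refine ⟨max C' 0, le_max_right _ _, fun σ hσ => le_trans (hC' ⟨σ, hσ⟩) (le_max_left _ _)⟩

/-- Quantitative defect bound for the semigroup: if `(y - T s y)/s → g` then
`‖T h y - y + h • g‖ ≤ h * ω` where `ω` bounds `‖g - T r g‖` on `[0,h]`. -/
lemma chernoff_defect_bound (T : ℝ → E →L[ℝ] E)
    (hT0 : T 0 = ContinuousLinearMap.id ℝ E)
    (hTsemigroup : ∀ s t : ℝ, 0 ≤ s → 0 ≤ t → T (s + t) = (T s).comp (T t))
    (y g : E)
    (hy : Tendsto (fun s : ℝ => s⁻¹ • (y - T s y)) (𝓝[>] (0:ℝ)) (𝓝 g))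
    {h Mb ω : ℝ} (hh : 0 < h)
    (hMb : ∀ r ∈ Set.Icc (0:ℝ) h, ‖T r‖ ≤ Mb)
    (hω : ∀ r ∈ Set.Icc (0:ℝ) h, ‖g - T r g‖ ≤ ω) :
    ‖T h y - y + h • g‖ ≤ h * ω := by
  set φ : ℝ → ℝ := fun s => ‖T s y - y + s • g‖ with hφ
  -- Step A: discrete subdivision estimate
  have stepA : ∀ n : ℕ, 0 < n → ∀ j : ℕ, j ≤ n →
      φ ((j : ℝ) * (h / n)) ≤ (j : ℝ) * (Mb * φ (h / n) + (h / n) * ω) := by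
    intro n hn
    have hn' : (0:ℝ) < h / n := div_pos hh (by exact_mod_cast hn)
    intro j
    induction j with
    | zero => intro _; simp [hφ, hT0]
    | succ j ih =>
      intro hjn
      have hj : j ≤ n := le_of_lt (Nat.lt_of_succ_le hjn)
      have hjh : (0:ℝ) ≤ (j:ℝ) * (h / n) := by positivity
      have hjh2 : (j:ℝ) * (h / n) ≤ h := by
        have hjn' : (j:ℝ) ≤ (n:ℝ) := by exact_mod_cast hj
        calc (j:ℝ) * (h/n) ≤ (n:ℝ) * (h/n) := mul_le_mul_of_nonneg_right hjn' (le_of_lt hn')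
          _ = h := by field_simp
      have hmem : (j:ℝ) * (h / n) ∈ Set.Icc (0:ℝ) h := ⟨hjh, hjh2⟩
      -- key identity
      have hsg : T ((j:ℝ) * (h / n) + h / n) = (T ((j:ℝ) * (h/n))).comp (T (h/n)) :=
        hTsemigroup _ _ hjh (le_of_lt hn')
      have idn : T (((j:ℝ)+1) * (h / n)) y - y + (((j:ℝ)+1) * (h / n)) • g
          = (T ((j:ℝ) * (h/n)) y - y + ((j:ℝ) * (h/n)) • g)
            + T ((j:ℝ) * (h/n)) (T (h/n) y - y + (h/n) • g)
            + (h/n) • (g - T ((j:ℝ) * (h/n)) g) := by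
        have e1 : ((j:ℝ)+1) * (h / n) = (j:ℝ) * (h/n) + h/n := by ring
        rw [e1, hsg]
        simp only [ContinuousLinearMap.comp_apply, map_sub, map_add, map_smul, smul_sub, add_smul]
        abel
      have est : φ (((j:ℝ)+1) * (h / n)) ≤ φ ((j:ℝ) * (h/n)) + Mb * φ (h/n) + (h/n) * ω := by
        simp only [hφ]
        rw [idn]
        refine le_trans (norm_add_le _ _) ?_
        refine add_le_add (le_trans (norm_add_le _ _) (add_le_add le_rfl ?_)) ?_
        · exact le_trans ((T _).le_opNorm _)
            (mul_le_mul_of_nonneg_right (hMb _ hmem) (norm_nonneg _))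
        · rw [norm_smul, Real.norm_eq_abs, abs_of_pos hn']
          exact mul_le_mul_of_nonneg_left (hω _ hmem) (le_of_lt hn')
      have goal1 : φ ((↑(j+1) : ℝ) * (h / n)) ≤ (↑(j+1) : ℝ) * (Mb * φ (h / n) + (h / n) * ω) := by
        push_cast
        have := ih hj
        linarith [est]
      exact goal1
  -- Step B: φ h ≤ Mb * (n * φ(h/n)) + h * ω
  have hφh : ∀ n : ℕ, 0 < n → φ h ≤ Mb * ((n:ℝ) * φ (h / n)) + h * ω := by
    intro n hn
    have hne : (n:ℝ) ≠ 0 := by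
      have := Nat.pos_iff_ne_zero.mp hn; exact_mod_cast this
    have hsA := stepA n hn n le_rfl
    have e2 : (n:ℝ) * (h / n) = h := by field_simp
    rw [e2] at hsA
    calc φ h ≤ (n:ℝ) * (Mb * φ (h / n) + (h / n) * ω) := hsA
      _ = Mb * ((n:ℝ) * φ (h / n)) + ((n:ℝ) * (h/n)) * ω := by ring
      _ = Mb * ((n:ℝ) * φ (h / n)) + h * ω := by rw [e2]
  -- Step C: limit
  have hseq : Tendsto (fun n : ℕ => h / n) atTop (𝓝[>] (0:ℝ)) := by
    refine tendsto_nhdsWithin_iff.2 ⟨tendsto_const_div_atTop_nhds_zero_nat h, ?_⟩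
    filter_upwards [eventually_gt_atTop 0] with n hn
    exact div_pos hh (by exact_mod_cast hn)
  have h1 : Tendsto (fun n : ℕ => (h/(n:ℝ))⁻¹ • (y - T (h/n) y)) atTop (𝓝 g) := hy.comp hseq
  have h2 : Tendsto (fun n : ℕ => ‖g - (h/(n:ℝ))⁻¹ • (y - T (h/n) y)‖) atTop (𝓝 0) := by
    have := tendsto_iff_norm_sub_tendsto_zero.mp h1
    simpa [norm_sub_rev] using this
  have hψ : Tendsto (fun n : ℕ => (n:ℝ) * φ (h / n)) atTop (𝓝 0) := by
    have h3 : Tendsto (fun n : ℕ => h * ‖g - (h/(n:ℝ))⁻¹ • (y - T (h/n) y)‖) atTop (𝓝 0) := by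
      have := h2.const_mul h
      rwa [mul_zero] at this
    have heq : ∀ᶠ n : ℕ in atTop,
        h * ‖g - (h/(n:ℝ))⁻¹ • (y - T (h/n) y)‖ = (n:ℝ) * φ (h / n) := by
      filter_upwards [eventually_gt_atTop 0] with n hn
      have hpos : (0:ℝ) < h / n := div_pos hh (by exact_mod_cast hn)
      have key : (h/(n:ℝ)) • (g - (h/(n:ℝ))⁻¹ • (y - T (h/n) y)) = T (h/n) y - y + (h/n) • g := by
        rw [smul_sub, smul_smul, mul_inv_cancel₀ (ne_of_gt hpos), one_smul]
        abel
      have : φ (h/n) = (h/(n:ℝ)) * ‖g - (h/(n:ℝ))⁻¹ • (y - T (h/n) y)‖ := by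
        simp only [hφ]
        rw [← key, norm_smul, Real.norm_eq_abs, abs_of_pos hpos]
      rw [this]
      have hne : (n:ℝ) ≠ 0 := by positivity
      field_simp
      try ring
    exact h3.congr' heq
  have hlim : Tendsto (fun n : ℕ => Mb * ((n:ℝ) * φ (h / n)) + h * ω) atTop (𝓝 (h * ω)) := by
    have := (hψ.const_mul Mb).add_const (h * ω)
    simpa using this
  refine ge_of_tendsto hlim ?_
  filter_upwards [eventually_gt_atTop 0] with n hn
  exact hφh n hn


/-- The graph of the generator is sequentially closed. -/
lemma chernoff_graph_closed (T : ℝ → E →L[ℝ] E)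
    (hT0 : T 0 = ContinuousLinearMap.id ℝ E)
    (hTsemigroup : ∀ s t : ℝ, 0 ≤ s → 0 ≤ t → T (s + t) = (T s).comp (T t))
    (hTcont : ∀ u : E, ContinuousOn (fun t => T t u) (Set.Ici (0 : ℝ))) :
    IsClosed {q : E × E |
      Tendsto (fun s : ℝ => s⁻¹ • (q.1 - T s q.1)) (𝓝[>] (0:ℝ)) (𝓝 q.2)} := by
  apply IsSeqClosed.isClosed
  intro q ql hq hqlim
  have hz : Tendsto (fun n => (q n).1) atTop (𝓝 ql.1) :=
    (continuous_fst.tendsto ql).comp hqlim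
  have hg : Tendsto (fun n => (q n).2) atTop (𝓝 ql.2) :=
    (continuous_snd.tendsto ql).comp hqlim
  set z := ql.1 with hzdef
  set g := ql.2 with hgdef
  simp only [Set.mem_setOf_eq]
  rw [Metric.tendsto_nhds]
  intro ε hε
  -- choose h₀ from continuity of r ↦ T r g at 0
  have hcont0 : ContinuousWithinAt (fun r => T r g) (Set.Ici (0:ℝ)) 0 :=
    (hTcont g).continuousWithinAt (Set.self_mem_Ici)
  rw [Metric.continuousWithinAt_iff] at hcont0
  obtain ⟨ρ, hρ, hρ'⟩ := hcont0 (ε/4) (by linarith)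
  set h₀ := ρ/2 with hh₀def
  have hh₀ : 0 < h₀ := by positivity
  obtain ⟨Mb, hMb0, hMb⟩ := chernoff_loc_bound T hTcont h₀
  have hTrg : ∀ r ∈ Set.Icc (0:ℝ) h₀, ‖g - T r g‖ ≤ ε/4 := by
    intro r hr
    have h1 : r ∈ Set.Ici (0:ℝ) := hr.1
    have h2 : dist r 0 < ρ := by
      rw [Real.dist_eq, sub_zero, abs_of_nonneg hr.1]
      calc r ≤ h₀ := hr.2
        _ < ρ := by rw [hh₀def]; linarith
    have := hρ' h1 h2
    rw [hT0] at this
    simp only [ContinuousLinearMap.id_apply] at this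
    rw [dist_eq_norm] at this
    rw [norm_sub_rev]
    exact le_of_lt this
  have key : ∀ s, 0 < s → s ≤ h₀ → ‖s⁻¹ • (z - T s z) - g‖ ≤ ε/4 := by
    intro s hs hsh₀
    have hIcc : Set.Icc (0:ℝ) s ⊆ Set.Icc (0:ℝ) h₀ :=
      Set.Icc_subset_Icc le_rfl hsh₀
    -- n-indexed upper bound
    have bound : ∀ n : ℕ, ‖(z - T s z) - s • g‖ ≤
        (1 + Mb) * ‖z - (q n).1‖ + s * (ε/4 + (1 + Mb) * ‖(q n).2 - g‖)
          + s * ‖(q n).2 - g‖ := by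
      intro n
      set zn := (q n).1 with hzn
      set gn := (q n).2 with hgn
      have iden : (z - T s z) - s • g
          = ((z - zn) - T s (z - zn)) + (-(T s zn - zn + s • gn)) + s • (gn - g) := by
        simp only [map_sub, smul_sub]
        abel
      have b1 : ‖(z - zn) - T s (z - zn)‖ ≤ (1 + Mb) * ‖z - zn‖ := by
        refine le_trans (norm_sub_le _ _) ?_
        have := (T s).le_opNorm (z - zn)
        have h2 := hMb s ⟨le_of_lt hs, hsh₀⟩
        nlinarith [norm_nonneg (z - zn)]
      have b2 : ‖T s zn - zn + s • gn‖ ≤ s * (ε/4 + (1 + Mb) * ‖gn - g‖) := by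
        refine chernoff_defect_bound T hT0 hTsemigroup zn gn (hq n) hs
          (fun r hr => hMb r (hIcc hr)) ?_
        intro r hr
        have hrh₀ := hIcc hr
        have e1 : gn - T r gn = (g - T r g) + ((gn - g) - T r (gn - g)) := by
          simp only [map_sub]; abel
        rw [e1]
        refine le_trans (norm_add_le _ _) ?_
        have b3 : ‖(gn - g) - T r (gn - g)‖ ≤ (1 + Mb) * ‖gn - g‖ := by
          refine le_trans (norm_sub_le _ _) ?_
          have := (T r).le_opNorm (gn - g)
          have h2 := hMb r hrh₀
          nlinarith [norm_nonneg (gn - g)]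
        have := hTrg r hrh₀
        linarith
      calc ‖(z - T s z) - s • g‖
          ≤ ‖((z - zn) - T s (z - zn)) + (-(T s zn - zn + s • gn))‖ + ‖s • (gn - g)‖ := by
            rw [iden]; exact norm_add_le _ _
        _ ≤ ‖(z - zn) - T s (z - zn)‖ + ‖T s zn - zn + s • gn‖ + ‖s • (gn - g)‖ := by
            have := norm_add_le ((z - zn) - T s (z - zn)) (-(T s zn - zn + s • gn))
            rw [norm_neg] at this
            linarith
        _ ≤ (1 + Mb) * ‖z - zn‖ + s * (ε/4 + (1 + Mb) * ‖gn - g‖) + s * ‖gn - g‖ := by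
            have : ‖s • (gn - g)‖ = s * ‖gn - g‖ := by
              rw [norm_smul, Real.norm_eq_abs, abs_of_pos hs]
            rw [this]
            exact add_le_add (add_le_add b1 b2) le_rfl
    -- pass to the limit n → ∞
    have hzn0 : Tendsto (fun n => ‖z - (q n).1‖) atTop (𝓝 0) := by
      have := tendsto_iff_norm_sub_tendsto_zero.mp hz
      simpa [norm_sub_rev] using this
    have hgn0 : Tendsto (fun n => ‖(q n).2 - g‖) atTop (𝓝 0) := by
      exact tendsto_iff_norm_sub_tendsto_zero.mp hg
    have hlim : Tendsto (fun n : ℕ => (1 + Mb) * ‖z - (q n).1‖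
        + s * (ε/4 + (1 + Mb) * ‖(q n).2 - g‖) + s * ‖(q n).2 - g‖) atTop
        (𝓝 (s * (ε/4))) := by
      have l1 := hzn0.const_mul (1 + Mb)
      have l2 := (hgn0.const_mul (1 + Mb)).const_add (ε/4)
      have l3 := l2.const_mul s
      have l4 := hgn0.const_mul s
      have := (l1.add l3).add l4
      simpa using this
    have hfin : ‖(z - T s z) - s • g‖ ≤ s * (ε/4) := ge_of_tendsto hlim
      (Eventually.of_forall bound)
    have : s⁻¹ • ((z - T s z) - s • g) = s⁻¹ • (z - T s z) - g := by
      rw [smul_sub, smul_smul, inv_mul_cancel₀ (ne_of_gt hs), one_smul]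
    rw [← this, norm_smul, Real.norm_eq_abs, abs_of_pos (by positivity : (0:ℝ) < s⁻¹)]
    calc s⁻¹ * ‖(z - T s z) - s • g‖ ≤ s⁻¹ * (s * (ε/4)) := by
          exact mul_le_mul_of_nonneg_left hfin (by positivity)
      _ = ε/4 := by field_simp
  -- conclude eventual closeness
  have hev : Set.Ioc (0:ℝ) h₀ ∈ 𝓝[>] (0:ℝ) := Ioc_mem_nhdsGT_of_mem ⟨le_rfl, hh₀⟩
  filter_upwards [hev] with s hs
  rw [dist_eq_norm]
  calc ‖s⁻¹ • (z - T s z) - g‖ ≤ ε/4 := key s hs.1 hs.2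
    _ < ε := by linarith


/-- Norm bound for foldr products of a proper family. -/
lemma chernoff_prod_bound' (P : ℝ → E →L[ℝ] E) (C : ℝ) (dmax : ℝ)
    (hPop : ∀ d : ℝ, 0 < d → d ≤ dmax → ‖P d‖ ≤ Real.exp (C * d)) :
    ∀ l : List ℝ, (∀ d ∈ l, 0 < d ∧ d ≤ dmax) → ∀ x : E,
      ‖((l.map P).foldr (· ∘L ·) (ContinuousLinearMap.id ℝ E)) x‖
        ≤ Real.exp (C * l.sum) * ‖x‖ := by
  intro l
  induction l with
  | nil => intro _ x; simp
  | cons d l' ih =>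
    intro hl x
    have hd := hl d List.mem_cons_self
    have hl' : ∀ e ∈ l', 0 < e ∧ e ≤ dmax := fun e he => hl e (List.mem_cons_of_mem d he)
    simp only [List.map_cons, List.foldr_cons, List.sum_cons, ContinuousLinearMap.comp_apply]
    calc ‖P d (((l'.map P).foldr (· ∘L ·) (ContinuousLinearMap.id ℝ E)) x)‖
        ≤ ‖P d‖ * ‖((l'.map P).foldr (· ∘L ·) (ContinuousLinearMap.id ℝ E)) x‖ :=
          (P d).le_opNorm _
      _ ≤ Real.exp (C * d) * (Real.exp (C * l'.sum) * ‖x‖) := by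
          apply mul_le_mul (hPop d hd.1 hd.2) (ih hl' x) (norm_nonneg _) (Real.exp_nonneg _)
      _ = Real.exp (C * (d + l'.sum)) * ‖x‖ := by
          rw [← mul_assoc, ← Real.exp_add]; ring_nf

/-- Telescoping estimate for the difference between the product of the proper family
and the semigroup. -/
lemma chernoff_tel_bound' (T P : ℝ → E →L[ℝ] E)
    (hT0 : T 0 = ContinuousLinearMap.id ℝ E)
    (hTsemigroup : ∀ s t : ℝ, 0 ≤ s → 0 ≤ t → T (s + t) = (T s).comp (T t))
    (C : ℝ) (dmax tmax : ℝ) (u : E) (η : ℝ) (hη : 0 ≤ η)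
    (hPop : ∀ d : ℝ, 0 < d → d ≤ dmax → ‖P d‖ ≤ Real.exp (C * d))
    (hCpos : 0 ≤ C)
    (hkick : ∀ d ρ : ℝ, 0 < d → d ≤ dmax → 0 ≤ ρ → ρ ≤ tmax →
      ‖P d (T ρ u) - T d (T ρ u)‖ ≤ η * d) :
    ∀ l : List ℝ, (∀ d ∈ l, 0 < d ∧ d ≤ dmax) → l.sum ≤ tmax →
      ‖((l.map P).foldr (· ∘L ·) (ContinuousLinearMap.id ℝ E)) u - T l.sum u‖
        ≤ Real.exp (C * l.sum) * (η * l.sum) := by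
  intro l
  induction l with
  | nil => intro _ _; simp [hT0]
  | cons d l' ih =>
    intro hl hsum
    have hd := hl d List.mem_cons_self
    have hl' : ∀ e ∈ l', 0 < e ∧ e ≤ dmax := fun e he => hl e (List.mem_cons_of_mem d he)
    have hs0 : 0 ≤ l'.sum := List.sum_nonneg (fun e he => le_of_lt (hl' e he).1)
    have hsum' : l'.sum ≤ tmax := by
      have : l'.sum ≤ d + l'.sum := by linarith [hd.1]
      exact le_trans this (by simpa [List.sum_cons] using hsum)
    have hsplit : T (d + l'.sum) = (T d).comp (T l'.sum) :=
      hTsemigroup d l'.sum (le_of_lt hd.1) hs0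
    have ihv := ih hl' hsum'
    set R : E := ((l'.map P).foldr (· ∘L ·) (ContinuousLinearMap.id ℝ E)) u with hR
    set Y : E := T l'.sum u with hY
    simp only [List.map_cons, List.foldr_cons, List.sum_cons, ContinuousLinearMap.comp_apply]
    rw [hsplit]
    simp only [ContinuousLinearMap.comp_apply]
    have tri : ‖P d R - T d Y‖ ≤ ‖P d (R - Y)‖ + ‖P d Y - T d Y‖ := by
      have : P d R - T d Y = P d (R - Y) + (P d Y - T d Y) := by
        rw [map_sub]; abel
      rw [this]; exact norm_add_le _ _
    have b1 : ‖P d (R - Y)‖ ≤ Real.exp (C * d) * (Real.exp (C * l'.sum) * (η * l'.sum)) := by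
      refine le_trans ((P d).le_opNorm _) ?_
      exact mul_le_mul (hPop d hd.1 hd.2) ihv (norm_nonneg _) (Real.exp_nonneg _)
    have b2 : ‖P d Y - T d Y‖ ≤ η * d := hkick d l'.sum hd.1 hd.2 hs0 hsum'
    have hexp : Real.exp (C * d) * Real.exp (C * l'.sum) = Real.exp (C * (d + l'.sum)) := by
      rw [← Real.exp_add]; ring_nf
    have hone : (1:ℝ) ≤ Real.exp (C * (d + l'.sum)) := by
      exact Real.one_le_exp (mul_nonneg hCpos (by linarith [hd.1]))
    calc ‖P d R - T d Y‖ ≤ ‖P d (R - Y)‖ + ‖P d Y - T d Y‖ := tri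
      _ ≤ Real.exp (C * d) * (Real.exp (C * l'.sum) * (η * l'.sum)) + η * d :=
          add_le_add b1 b2
      _ = Real.exp (C * (d + l'.sum)) * (η * l'.sum) + η * d := by
          rw [← mul_assoc, hexp]
      _ ≤ Real.exp (C * (d + l'.sum)) * (η * l'.sum) + Real.exp (C * (d + l'.sum)) * (η * d) := by
          have : η * d ≤ Real.exp (C * (d + l'.sum)) * (η * d) := by
            nlinarith [mul_nonneg hη (le_of_lt hd.1)]
          linarith
      _ = Real.exp (C * (d + l'.sum)) * (η * (d + l'.sum)) := by ring


/-- Uniform smallness of the kick `‖(P s - T s) x‖ / s` along the compact orbit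
`{T σ (T ε₀ v) : σ ∈ [0,t]}`. -/
lemma chernoff_uniform_kick (T P : ℝ → E →L[ℝ] E)
    (hT0 : T 0 = ContinuousLinearMap.id ℝ E)
    (hTsemigroup : ∀ s t : ℝ, 0 ≤ s → 0 ≤ t → T (s + t) = (T s).comp (T t))
    (hTcont : ∀ u : E, ContinuousOn (fun t => T t u) (Set.Ici (0 : ℝ)))
    (D : Set E) (L : E → E)
    (hD : D = {u : E | ∃ w : E,
      Tendsto (fun t : ℝ => t⁻¹ • (u - T t u)) (𝓝[>] (0 : ℝ)) (𝓝 w)})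
    (hL : ∀ u ∈ D,
      Tendsto (fun t : ℝ => t⁻¹ • (u - T t u)) (𝓝[>] (0 : ℝ)) (𝓝 (L u)))
    (hPcont : ∀ u : E, ContinuousOn (fun t => P t u) (Set.Ici (0 : ℝ)))
    (hPgenerator : ∀ ε : ℝ, 0 < ε → ∀ v ∈ D,
      Tendsto (fun t : ℝ => t⁻¹ • (P t (T ε v) - T ε v)) (𝓝[>] (0 : ℝ))
        (𝓝 (-(L (T ε v)))))
    (δ : ℝ) (hδ : 0 < δ) (t : ℝ) (ht : 0 < t)
    (v : E) (hv : v ∈ D) (ε₀ : ℝ) (hε₀ : 0 < ε₀) (η : ℝ) (hη : 0 < η) :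
    ∃ s₀ : ℝ, 0 < s₀ ∧ s₀ ≤ δ ∧ ∀ s, 0 < s → s ≤ s₀ → ∀ σ, 0 ≤ σ → σ ≤ t →
      ‖P s (T σ (T ε₀ v)) - T s (T σ (T ε₀ v))‖ ≤ η * s := by
  -- commutation of the semigroup
  have hcomm : ∀ a b : ℝ, 0 ≤ a → 0 ≤ b → ∀ x : E, T a (T b x) = T b (T a x) := by
    intro a b ha hb x
    have h1 : T a (T b x) = T (a + b) x := by rw [hTsemigroup a b ha hb]; rfl
    have h2 : T b (T a x) = T (b + a) x := by rw [hTsemigroup b a hb ha]; rfl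
    rw [h1, h2, add_comm]
  -- the graph of the generator as a closed submodule of E × E
  set pset : Set (E × E) := {q : E × E |
      Tendsto (fun s : ℝ => s⁻¹ • (q.1 - T s q.1)) (𝓝[>] (0:ℝ)) (𝓝 q.2)} with hpset
  have hplus : ∀ q r : E × E, q ∈ pset → r ∈ pset → q + r ∈ pset := by
    intro q r hq hr
    simp only [hpset, Set.mem_setOf_eq] at hq hr ⊢
    have heq : ∀ s : ℝ, s⁻¹ • (q.1 - T s q.1) + s⁻¹ • (r.1 - T s r.1)
        = s⁻¹ • ((q + r).1 - T s (q + r).1) := by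
      intro s
      simp only [Prod.fst_add, map_add, ← smul_add]
      congr 1
      abel
    have h2 := hq.add hr
    exact (h2.congr heq)
  have hzero : (0 : E × E) ∈ pset := by
    simp only [hpset, Set.mem_setOf_eq, Prod.fst_zero, Prod.snd_zero]
    have : ∀ s : ℝ, s⁻¹ • ((0:E) - T s 0) = (0:E) := by
      intro s; simp
    exact tendsto_const_nhds.congr (fun s => (this s).symm)
  have hsmulmem : ∀ (c : ℝ) (q : E × E), q ∈ pset → c • q ∈ pset := by
    intro c q hq
    simp only [hpset, Set.mem_setOf_eq] at hq ⊢
    have heq : ∀ s : ℝ, c • (s⁻¹ • (q.1 - T s q.1))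
        = s⁻¹ • ((c • q).1 - T s (c • q).1) := by
      intro s
      simp only [Prod.smul_fst, map_smul, smul_sub, smul_comm c s⁻¹]
    have h2 := hq.const_smul c
    exact h2.congr heq
  let p : Submodule ℝ (E × E) :=
    { carrier := pset
      add_mem' := fun {q r} hq hr => hplus q r hq hr
      zero_mem' := hzero
      smul_mem' := fun c {q} hq => hsmulmem c q hq }
  have hpclosed : IsClosed (p : Set (E × E)) :=
    chernoff_graph_closed T hT0 hTsemigroup hTcont
  haveI : CompleteSpace p := hpclosed.completeSpace_coe
  -- invariance of the graph under T a (componentwise)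
  have hinv : ∀ (a : ℝ), 0 ≤ a → ∀ q : E × E, q ∈ pset → (T a q.1, T a q.2) ∈ pset := by
    intro a ha q hq
    simp only [hpset, Set.mem_setOf_eq] at hq ⊢
    have h2 : Tendsto (fun s : ℝ => T a (s⁻¹ • (q.1 - T s q.1))) (𝓝[>] (0:ℝ))
        (𝓝 (T a q.2)) := ((T a).continuous.tendsto _).comp hq
    refine h2.congr' ?_
    filter_upwards [self_mem_nhdsWithin] with s hs
    rw [map_smul, map_sub]
    congr 2
    exact hcomm a s ha (le_of_lt hs) q.1
  -- the operator family on the graph space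
  let Ψ : ℝ → p →L[ℝ] E := fun s => s⁻¹ • ((P s - T s).comp
    ((T ε₀).comp ((ContinuousLinearMap.fst ℝ E E).comp p.subtypeL)))
  have Ψapp : ∀ (s : ℝ) (q : p), Ψ s q
      = s⁻¹ • (P s (T ε₀ (q : E × E).1) - T s (T ε₀ (q : E × E).1)) := by
    intro s q
    simp [Ψ, ContinuousLinearMap.comp_apply, ContinuousLinearMap.sub_apply]
  -- pointwise convergence to 0
  have hΨ0 : ∀ q : p, Tendsto (fun s : ℝ => Ψ s q) (𝓝[>] (0:ℝ)) (𝓝 0) := by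
    intro q
    have hq : (q : E × E) ∈ pset := q.2
    have hq1D : (q : E × E).1 ∈ D := by
      rw [hD]; exact ⟨(q : E × E).2, hq⟩
    set w : E := T ε₀ (q : E × E).1 with hw
    have hwmem : (w, T ε₀ (q : E × E).2) ∈ pset := hinv ε₀ (le_of_lt hε₀) _ hq
    have hwD : w ∈ D := by
      rw [hD]; exact ⟨T ε₀ (q : E × E).2, hwmem⟩
    have hPside : Tendsto (fun s : ℝ => s⁻¹ • (P s w - w)) (𝓝[>] (0:ℝ))
        (𝓝 (-(L w))) := hPgenerator ε₀ hε₀ _ hq1D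
    have hTside : Tendsto (fun s : ℝ => s⁻¹ • (w - T s w)) (𝓝[>] (0:ℝ))
        (𝓝 (L w)) := hL w hwD
    have hsum := hPside.add hTside
    rw [neg_add_cancel] at hsum
    refine hsum.congr (fun s => ?_)
    rw [Ψapp, ← smul_add]
    congr 1
    abel
  -- pointwise boundedness on (0, δ]
  have hbdd : ∀ q : p, ∃ Cq : ℝ, ∀ i : ↥(Set.Ioc (0:ℝ) δ), ‖Ψ (i : ℝ) q‖ ≤ Cq := by
    intro q
    set w : E := T ε₀ (q : E × E).1 with hw
    have hsmall := Metric.tendsto_nhds.mp (hΨ0 q) 1 one_pos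
    obtain ⟨s₁, hs₁pos, hs₁⟩ := mem_nhdsGT_iff_exists_Ioc_subset.mp hsmall
    set s₂ : ℝ := min s₁ δ with hs₂def
    have hs₂pos : 0 < s₂ := lt_min hs₁pos hδ
    have hfc : ContinuousOn (fun s : ℝ => s⁻¹ • (P s w - T s w)) (Set.Icc s₂ δ) := by
      have hsub : Set.Icc s₂ δ ⊆ Set.Ici (0:ℝ) := fun x hx =>
        le_trans (le_of_lt hs₂pos) hx.1
      refine ContinuousOn.smul ?_ (((hPcont w).mono hsub).sub ((hTcont w).mono hsub))
      exact continuousOn_id.inv₀ (fun x hx => ne_of_gt (lt_of_lt_of_le hs₂pos hx.1))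
    obtain ⟨C₂, hC₂⟩ := (isCompact_Icc (a := s₂) (b := δ)).exists_bound_of_continuousOn hfc
    refine ⟨max 1 C₂, ?_⟩
    rintro ⟨i, hi0, hiδ⟩
    rcases le_or_gt i s₁ with hle | hlt
    · have hmem : i ∈ Set.Ioc (0:ℝ) s₁ := ⟨hi0, hle⟩
      have := hs₁ hmem
      simp only [Set.mem_setOf_eq, dist_zero_right] at this
      exact le_trans (le_of_lt this) (le_max_left _ _)
    · have hmem : i ∈ Set.Icc s₂ δ := ⟨le_trans (min_le_left _ _) (le_of_lt hlt), hiδ⟩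
      have := hC₂ i hmem
      rw [Ψapp]
      exact le_trans this (le_max_right _ _)
  obtain ⟨Γ₀, hΓ₀⟩ := banach_steinhaus
    (g := fun i : ↥(Set.Ioc (0:ℝ) δ) => Ψ (i : ℝ)) hbdd
  set Γ : ℝ := max Γ₀ 0 with hΓdef
  have hΓ0 : 0 ≤ Γ := le_max_right _ _
  have hΓ : ∀ s : ℝ, 0 < s → s ≤ δ → ‖Ψ s‖ ≤ Γ :=
    fun s h1 h2 => le_trans (hΓ₀ ⟨s, h1, h2⟩) (le_max_left _ _)
  -- the compact orbit inside the graph space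
  have hvLv : ((v, L v) : E × E) ∈ pset := hL v hv
  have hmemorbit : ∀ σ : ℝ, 0 ≤ σ → ((T σ v, T σ (L v)) : E × E) ∈ pset :=
    fun σ hσ => hinv σ hσ _ hvLv
  let forb : ↥(Set.Icc (0:ℝ) t) → p := fun σ =>
    ⟨(T (σ : ℝ) v, T (σ : ℝ) (L v)), hmemorbit σ σ.2.1⟩
  have hforbcont : Continuous forb := by
    apply Continuous.subtype_mk
    have hsub : Set.Icc (0:ℝ) t ⊆ Set.Ici (0:ℝ) := fun x hx => hx.1
    exact Continuous.prodMk ((hTcont v).mono hsub).restrict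
      ((hTcont (L v)).mono hsub).restrict
  have hKcompact : IsCompact (Set.range forb) := isCompact_range hforbcont
  -- finite subcover with balls of radius r
  set r : ℝ := η / (2 * (Γ + 1)) with hrdef
  have hr : 0 < r := by positivity
  obtain ⟨QS, hQS⟩ := hKcompact.elim_nhds_subcover (fun q => Metric.ball q r)
    (fun q _ => Metric.ball_mem_nhds q hr)
  -- thresholds at the finitely many centers
  have hthr : ∀ q : p, ∃ s₁ : ℝ, 0 < s₁ ∧ ∀ s : ℝ, 0 < s → s ≤ s₁ → ‖Ψ s q‖ ≤ η/2 := by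
    intro q
    have hsmall := Metric.tendsto_nhds.mp (hΨ0 q) (η/2) (by positivity)
    obtain ⟨s₁, hs₁pos, hs₁⟩ := mem_nhdsGT_iff_exists_Ioc_subset.mp hsmall
    refine ⟨s₁, hs₁pos, fun s h1 h2 => ?_⟩
    have := hs₁ ⟨h1, h2⟩
    simp only [Set.mem_setOf_eq, dist_zero_right] at this
    exact le_of_lt this
  choose thr hthrpos hthr' using hthr
  have hQSne : QS.Nonempty := by
    by_contra hne
    rw [Finset.not_nonempty_iff_eq_empty] at hne
    have h0t : (0:ℝ) ∈ Set.Icc (0:ℝ) t := ⟨le_rfl, le_of_lt ht⟩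
    have := hQS.2 (Set.mem_range_self (⟨0, h0t⟩ : ↥(Set.Icc (0:ℝ) t)))
    rw [hne] at this
    simp at this
  set s₀ : ℝ := min δ (QS.inf' hQSne thr) with hs₀def
  have hs₀pos : 0 < s₀ := by
    refine lt_min hδ ?_
    rw [Finset.lt_inf'_iff]
    exact fun q _ => hthrpos q
  refine ⟨s₀, hs₀pos, min_le_left _ _, ?_⟩
  intro s hs hss₀ σ hσ0 hσt
  set q : p := forb ⟨σ, hσ0, hσt⟩ with hqdef
  have hqK : q ∈ Set.range forb := Set.mem_range_self _
  have := hQS.2 hqK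
  rw [Set.mem_iUnion₂] at this
  obtain ⟨i, hiQS, hqi⟩ := this
  rw [Metric.mem_ball] at hqi
  have hsδ : s ≤ δ := le_trans hss₀ (min_le_left _ _)
  have hΨq : ‖Ψ s q‖ ≤ η := by
    have hsplit : Ψ s q = Ψ s (q - i) + Ψ s i := by rw [map_sub]; abel
    have b1 : ‖Ψ s (q - i)‖ ≤ Γ * r := by
      refine le_trans ((Ψ s).le_opNorm _) ?_
      have hd : ‖q - i‖ ≤ r := by
        rw [← dist_eq_norm]
        exact le_of_lt hqi
      exact mul_le_mul (hΓ s hs hsδ) hd (norm_nonneg _) hΓ0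
    have b2 : ‖Ψ s i‖ ≤ η/2 := by
      refine hthr' i s hs ?_
      exact le_trans hss₀ (le_trans (min_le_right _ _) (Finset.inf'_le thr hiQS))
    have hΓr : Γ * r ≤ η/2 := by
      have h1 : (0:ℝ) < 2 * (Γ + 1) := by linarith
      rw [hrdef, mul_div_assoc', div_le_div_iff₀ h1 (by norm_num : (0:ℝ) < 2)]
      nlinarith [hη, hΓ0]
    calc ‖Ψ s q‖ ≤ ‖Ψ s (q - i)‖ + ‖Ψ s i‖ := by rw [hsplit]; exact norm_add_le _ _
      _ ≤ Γ * r + η/2 := add_le_add b1 b2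
      _ ≤ η := by linarith
  -- translate back
  have hq1 : (q : E × E).1 = T σ v := rfl
  have hvec : T σ (T ε₀ v) = T ε₀ (T σ v) := hcomm σ ε₀ hσ0 (le_of_lt hε₀) v
  have hnorm : ‖Ψ s q‖ = s⁻¹ * ‖P s (T σ (T ε₀ v)) - T s (T σ (T ε₀ v))‖ := by
    rw [Ψapp, hq1, ← hvec, norm_smul, Real.norm_eq_abs, abs_of_pos (by positivity)]
  have : s⁻¹ * ‖P s (T σ (T ε₀ v)) - T s (T σ (T ε₀ v))‖ ≤ η := by
    rw [← hnorm]; exact hΨq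
  calc ‖P s (T σ (T ε₀ v)) - T s (T σ (T ε₀ v))‖
      = s * (s⁻¹ * ‖P s (T σ (T ε₀ v)) - T s (T σ (T ε₀ v))‖) := by
        field_simp
    _ ≤ s * η := mul_le_mul_of_nonneg_left this (le_of_lt hs)
    _ = η * s := mul_comm _ _


end ChernoffAux

/-- **Chernoff's theorem on proper families.** If `(T t)` is a strongly continuous
semigroup on a Banach space `E` with densely defined generator `L` (with domain `D`),
and `(P t)` is a proper family, i.e. `‖P t‖ ≤ 1 + C t` near `0`, `P` is strongly
continuous with `P 0 = id`, and `(P t u - u)/t → -L u` for all `u = T ε v`, `ε > 0`,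
`v ∈ D`, then for any sequence of partitions of `[0, t]` whose mesh tends to zero,
the compositions `P (τ₁ - τ₀) ∘ ⋯ ∘ P (τ_N - τ_{N-1})` applied to `u` converge to
`T t u`. -/
theorem chernoff_proper_family
    {E : Type*} [NormedAddCommGroup E] [NormedSpace ℝ E] [CompleteSpace E]
    (T : ℝ → E →L[ℝ] E)
    (hT0 : T 0 = ContinuousLinearMap.id ℝ E)
    (hTsemigroup : ∀ s t : ℝ, 0 ≤ s → 0 ≤ t → T (s + t) = (T s).comp (T t))
    (hTcont : ∀ u : E, ContinuousOn (fun t => T t u) (Set.Ici (0 : ℝ)))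
    (D : Set E) (L : E → E)
    (hD : D = {u : E | ∃ w : E,
      Tendsto (fun t : ℝ => t⁻¹ • (u - T t u)) (𝓝[>] (0 : ℝ)) (𝓝 w)})
    (hL : ∀ u ∈ D,
      Tendsto (fun t : ℝ => t⁻¹ • (u - T t u)) (𝓝[>] (0 : ℝ)) (𝓝 (L u)))
    (hDdense : Dense D)
    (P : ℝ → E →L[ℝ] E)
    (C δ : ℝ) (hC : 0 < C) (hδ : 0 < δ)
    (hPnorm : ∀ t : ℝ, 0 ≤ t → t ≤ δ → ‖P t‖ ≤ 1 + C * t)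
    (hP0 : P 0 = ContinuousLinearMap.id ℝ E)
    (hPcont : ∀ u : E, ContinuousOn (fun t => P t u) (Set.Ici (0 : ℝ)))
    (hPgenerator : ∀ ε : ℝ, 0 < ε → ∀ v ∈ D,
      Tendsto (fun t : ℝ => t⁻¹ • (P t (T ε v) - T ε v)) (𝓝[>] (0 : ℝ))
        (𝓝 (-(L (T ε v)))))
    (u : E) (t : ℝ) (ht : 0 < t)
    (N : ℕ → ℕ) (hN : ∀ k, 0 < N k)
    (τ : (k : ℕ) → Fin (N k + 1) → ℝ)
    (hτmono : ∀ k, StrictMono (τ k))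
    (hτ0 : ∀ k, τ k 0 = 0)
    (hτlast : ∀ k, τ k (Fin.last (N k)) = t)
    (hmesh : Tendsto
      (fun k => ⨆ j : Fin (N k), (τ k j.succ - τ k j.castSucc)) atTop (𝓝 0)) :
    Tendsto
      (fun k =>
        ((List.ofFn (fun j : Fin (N k) => P (τ k j.succ - τ k j.castSucc))).foldr
          (· ∘L ·) (ContinuousLinearMap.id ℝ E)) u)
      atTop (𝓝 (T t u)) := by
  have hC0 : (0:ℝ) ≤ C := le_of_lt hC
  -- basic facts about the increments
  have hΔpos : ∀ k (j : Fin (N k)), 0 < τ k j.succ - τ k j.castSucc := fun k j =>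
    sub_pos.2 (hτmono k (Fin.castSucc_lt_succ (i := j)))
  have hΔle : ∀ k (j : Fin (N k)), τ k j.succ - τ k j.castSucc
      ≤ ⨆ j' : Fin (N k), (τ k j'.succ - τ k j'.castSucc) := by
    intro k j
    haveI : Nonempty (Fin (N k)) := ⟨⟨0, hN k⟩⟩
    exact le_ciSup (f := fun j' : Fin (N k) => τ k j'.succ - τ k j'.castSucc)
      (Set.Finite.bddAbove (Set.finite_range _)) j
  -- the sum of the increments is t
  have hsum : ∀ k, (List.ofFn (fun j : Fin (N k) => τ k j.succ - τ k j.castSucc)).sum = t := by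
    intro k
    rw [List.sum_ofFn]
    set f : ℕ → ℝ := fun i => τ k ⟨min i (N k), Nat.lt_succ_of_le (min_le_right _ _)⟩ with hf
    have hterm : ∀ j : Fin (N k), τ k j.succ - τ k j.castSucc = f (↑j + 1) - f ↑j := by
      intro j
      have h1 : τ k j.succ = f (↑j + 1) := by
        rw [hf]
        congr 1
        apply Fin.ext
        simp [Fin.val_succ, Nat.min_eq_left (Nat.succ_le_of_lt j.isLt)]
      have h2 : τ k j.castSucc = f ↑j := by
        rw [hf]
        congr 1
        apply Fin.ext
        simp [Fin.coe_castSucc, Nat.min_eq_left (le_of_lt j.isLt)]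
      rw [h1, h2]
    rw [Finset.sum_congr rfl (fun j _ => hterm j)]
    rw [Fin.sum_univ_eq_sum_range (fun i => f (i+1) - f i) (N k)]
    rw [Finset.sum_range_sub f (N k)]
    have hlastf : f (N k) = t := by
      rw [hf]
      have he : (⟨min (N k) (N k), Nat.lt_succ_of_le (min_le_right _ _)⟩ : Fin (N k + 1))
          = Fin.last (N k) := by
        apply Fin.ext; simp
      simp only []
      rw [he, hτlast]
    have h0f : f 0 = 0 := by
      rw [hf]
      have he : (⟨min 0 (N k), Nat.lt_succ_of_le (min_le_right _ _)⟩ : Fin (N k + 1))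
          = (0 : Fin (N k + 1)) := by
        apply Fin.ext; simp
      simp only []
      rw [he, hτ0]
    rw [hlastf, h0f, sub_zero]
  -- main ε-argument
  rw [Metric.tendsto_atTop]
  intro ε hε
  set A : ℝ := Real.exp (C * t) with hA
  have hA1 : 1 ≤ A := Real.one_le_exp (by positivity)
  set B : ℝ := ‖T t‖ with hB
  have hB0 : 0 ≤ B := norm_nonneg _
  set θ : ℝ := ε / (2 * (A + B + 1)) with hθ
  have hθpos : 0 < θ := by
    rw [hθ]
    have : (0:ℝ) < A + B + 1 := by linarith
    positivity
  obtain ⟨v, hvD, hvu⟩ := Metric.mem_closure_iff.mp (hDdense u) (θ/2) (by positivity)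
  have hcont0 : ContinuousWithinAt (fun r => T r v) (Set.Ici (0:ℝ)) 0 :=
    (hTcont v).continuousWithinAt Set.self_mem_Ici
  rw [Metric.continuousWithinAt_iff] at hcont0
  obtain ⟨ρ, hρpos, hρ⟩ := hcont0 (θ/2) (by positivity)
  set ε₀ : ℝ := ρ/2 with hε₀def
  have hε₀pos : 0 < ε₀ := by positivity
  set u' : E := T ε₀ v with hu'
  have hu'v : dist u' v < θ/2 := by
    have h1 : ε₀ ∈ Set.Ici (0:ℝ) := le_of_lt hε₀pos
    have h2 : dist ε₀ (0:ℝ) < ρ := by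
      rw [Real.dist_eq, sub_zero, abs_of_pos hε₀pos, hε₀def]; linarith
    have h3 := hρ h1 h2
    rw [hT0] at h3
    simpa using h3
  have huu' : ‖u - u'‖ < θ := by
    have h4 : dist u u' < θ := by
      calc dist u u' ≤ dist u v + dist v u' := dist_triangle _ _ _
        _ = dist u v + dist u' v := by rw [dist_comm v u']
        _ < θ/2 + θ/2 := add_lt_add hvu hu'v
        _ = θ := by ring
    rwa [dist_eq_norm] at h4
  set η : ℝ := ε / (2 * (A * t + 1)) with hηdef
  have hAt : 0 < A * t := by nlinarith
  have hηpos : 0 < η := by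
    rw [hηdef]
    have : (0:ℝ) < A * t + 1 := by linarith
    positivity
  obtain ⟨s₀, hs₀pos, hs₀δ, hkick⟩ := chernoff_uniform_kick T P hT0 hTsemigroup hTcont
    D L hD hL hPcont hPgenerator δ hδ t ht v hvD ε₀ hε₀pos η hηpos
  have hfin1 : A * ‖u - u'‖ + B * ‖u' - u‖ < ε / 2 := by
    rw [norm_sub_rev u' u]
    have hAB : (0:ℝ) < A + B := by linarith
    have h7 : (A + B) * ‖u - u'‖ < (A + B) * θ :=
      mul_lt_mul_of_pos_left huu' hAB
    have h8 : (A + B) * θ < ε / 2 := by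
      rw [hθ]
      rw [mul_div_assoc']
      rw [div_lt_div_iff₀ (by linarith) (by norm_num : (0:ℝ) < 2)]
      nlinarith
    nlinarith [norm_nonneg (u - u')]
  have hfin2 : A * (η * t) < ε / 2 := by
    rw [hηdef]
    rw [show A * (ε / (2 * (A * t + 1)) * t) = (A * t) * ε / (2 * (A * t + 1)) by ring]
    rw [div_lt_div_iff₀ (by linarith) (by norm_num : (0:ℝ) < 2)]
    nlinarith
  have hevmesh : ∀ᶠ k in atTop,
      (⨆ j : Fin (N k), (τ k j.succ - τ k j.castSucc)) < s₀ := by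
    have : Set.Iio s₀ ∈ 𝓝 (0:ℝ) := Iio_mem_nhds hs₀pos
    exact hmesh.eventually this
  have hmain : ∀ᶠ k in atTop,
      dist (((List.ofFn (fun j : Fin (N k) => P (τ k j.succ - τ k j.castSucc))).foldr
        (· ∘L ·) (ContinuousLinearMap.id ℝ E)) u) (T t u) < ε := by
    filter_upwards [hevmesh] with k hk
    have hmem : ∀ d ∈ List.ofFn (fun j : Fin (N k) => τ k j.succ - τ k j.castSucc),
        0 < d ∧ d ≤ s₀ := by
      intro d hd
      rw [List.mem_ofFn] at hd
      obtain ⟨j, hj⟩ := hd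
      rw [← hj]
      exact ⟨hΔpos k j, le_of_lt (lt_of_le_of_lt (hΔle k j) hk)⟩
    have hPop : ∀ d : ℝ, 0 < d → d ≤ s₀ → ‖P d‖ ≤ Real.exp (C * d) := by
      intro d h1 h2
      calc ‖P d‖ ≤ 1 + C * d := hPnorm d (le_of_lt h1) (le_trans h2 hs₀δ)
        _ ≤ Real.exp (C * d) := by
            have := Real.add_one_le_exp (C * d)
            linarith
    have hkick' : ∀ d ρ' : ℝ, 0 < d → d ≤ s₀ → 0 ≤ ρ' → ρ' ≤ t →
        ‖P d (T ρ' u') - T d (T ρ' u')‖ ≤ η * d :=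
      fun d ρ' h1 h2 h3 h4 => hkick d h1 h2 ρ' h3 h4
    have htel := chernoff_tel_bound' T P hT0 hTsemigroup C s₀ t u' η (le_of_lt hηpos)
      hPop hC0 hkick'
      (List.ofFn (fun j : Fin (N k) => τ k j.succ - τ k j.castSucc)) hmem
      (le_of_eq (hsum k))
    rw [hsum k] at htel
    have hprod := chernoff_prod_bound' P C s₀ hPop
      (List.ofFn (fun j : Fin (N k) => τ k j.succ - τ k j.castSucc)) hmem (u - u')
    rw [hsum k] at hprod
    set F : E →L[ℝ] E := (((List.ofFn (fun j : Fin (N k) =>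
        τ k j.succ - τ k j.castSucc)).map P).foldr (· ∘L ·)
        (ContinuousLinearMap.id ℝ E)) with hF
    have hgoalF : (List.ofFn (fun j : Fin (N k) => P (τ k j.succ - τ k j.castSucc))).foldr
        (· ∘L ·) (ContinuousLinearMap.id ℝ E) = F := by
      rw [hF, List.map_ofFn]
      rfl
    rw [hgoalF, dist_eq_norm]
    have hdecomp : F u - T t u = F (u - u') + (F u' - T t u') + T t (u' - u) := by
      simp only [map_sub]
      abel
    have hTdiff : ‖T t (u' - u)‖ ≤ B * ‖u' - u‖ := (T t).le_opNorm _
    have hstep : ‖F u - T t u‖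
        ≤ ‖F (u - u')‖ + ‖F u' - T t u'‖ + ‖T t (u' - u)‖ := by
      rw [hdecomp]
      refine le_trans (norm_add_le _ _) ?_
      exact add_le_add (norm_add_le _ _) le_rfl
    calc ‖F u - T t u‖ ≤ ‖F (u - u')‖ + ‖F u' - T t u'‖ + ‖T t (u' - u)‖ := hstep
      _ ≤ A * ‖u - u'‖ + A * (η * t) + B * ‖u' - u‖ := by
          exact add_le_add (add_le_add hprod htel) hTdiff
      _ < ε := by linarith
  exact eventually_atTop.mp hmain
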